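/- Let n ≥ 2, fix a unit vector a ∈ ℝ^{2n}, and let D = {(b, X) ∈ ℝ^{2n} × ℝ² : ⟨a, b⟩ = 0, ‖b‖² + ‖X‖² = 1}. Let j₊ : ℝ² → ℝ² be the rotation j₊(x₁,x₂) = (-x₂, x₁). Define F, G : D → (ℝ^{2n} × ℝ²) × (ℝ^{2n} × ℝ²) by F(b,X) = ((√(1-‖X‖²)·a, X), (b, -j₊X)) and G(b,X) = ((a, 0), (b, X)). Then F and G take values in Q̃_{n+1} = {(u,v) ∈ ℝ^{2n+2} × ℝ^{2n+2} : ‖u‖ = 1, ‖v‖ = 1, ⟨u,v⟩ = 0} (identifying ℝ^{2n+2} = ℝ^{2n} × ℝ²), and F and G are homotopic as continuous maps D → Q̃_{n+1}. -/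

import Mathlib

open scoped Topology RealInnerProductSpace

/-- The Stiefel manifold of orthonormal 2-frames in `ℝ^k`, with the subspace topology. -/
def Stiefel2 (k : ℕ) : Type :=
  {p : EuclideanSpace ℝ (Fin k) × EuclideanSpace ℝ (Fin k) //
    ‖p.1‖ = 1 ∧ ‖p.2‖ = 1 ∧ ⟪p.1, p.2⟫ = 0}

noncomputable instance (k : ℕ) : TopologicalSpace (Stiefel2 k) :=
  inferInstanceAs (TopologicalSpace
    {p : EuclideanSpace ℝ (Fin k) × EuclideanSpace ℝ (Fin k) //
      ‖p.1‖ = 1 ∧ ‖p.2‖ = 1 ∧ ⟪p.1, p.2⟫ = 0})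

/-- The identification `ℝ^m × ℝ² = ℝ^{m+2}`. -/
noncomputable def glue {m : ℕ} (b : EuclideanSpace ℝ (Fin m)) (X : EuclideanSpace ℝ (Fin 2)) :
    EuclideanSpace ℝ (Fin (m + 2)) := WithLp.toLp 2 fun i =>
  if h : (i : ℕ) < m then b ⟨i, h⟩ else X ⟨(i : ℕ) - m, by have := i.isLt; omega⟩

/-- The standard rotation `j₊(x₁, x₂) = (-x₂, x₁)` of `ℝ²`. -/
noncomputable def jplus (X : EuclideanSpace ℝ (Fin 2)) : EuclideanSpace ℝ (Fin 2) := WithLp.toLp 2 fun i =>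
  if (i : ℕ) = 0 then -(X 1) else X 0

/- ### Auxiliary lemmas -/

lemma glue_inner {m : ℕ} (b b' : EuclideanSpace ℝ (Fin m)) (X X' : EuclideanSpace ℝ (Fin 2)) :
    ⟪glue b X, glue b' X'⟫ = ⟪b, b'⟫ + ⟪X, X'⟫ := by
  simp only [PiLp.inner_apply, RCLike.inner_apply, conj_trivial]
  rw [Fin.sum_univ_add]
  congr 1
  · refine Finset.sum_congr rfl fun i _ => ?_
    simp [glue, Fin.castAdd, Fin.castLE, i.isLt]
  · refine Finset.sum_congr rfl fun i _ => ?_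
    have h : ¬ ((Fin.natAdd m i : Fin (m + 2)) : ℕ) < m := by simp
    simp only [glue, PiLp.toLp_apply, dif_neg h]
    congr 1 <;> exact congrArg _ (Fin.ext (by simp))

lemma glue_norm_sq {m : ℕ} (b : EuclideanSpace ℝ (Fin m)) (X : EuclideanSpace ℝ (Fin 2)) :
    ‖glue b X‖ ^ 2 = ‖b‖ ^ 2 + ‖X‖ ^ 2 := by
  rw [← real_inner_self_eq_norm_sq, ← real_inner_self_eq_norm_sq, ← real_inner_self_eq_norm_sq,
    glue_inner]

lemma glue_continuous {m : ℕ} :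
    Continuous (fun p : EuclideanSpace ℝ (Fin m) × EuclideanSpace ℝ (Fin 2) => glue p.1 p.2) := by
  suffices hc : Continuous (fun p : EuclideanSpace ℝ (Fin m) × EuclideanSpace ℝ (Fin 2) =>
      (fun i : Fin (m + 2) => if h : (i : ℕ) < m then p.1 ⟨i, h⟩
        else p.2 ⟨(i : ℕ) - m, by have := i.isLt; omega⟩ : Fin (m + 2) → ℝ)) by
    exact (PiLp.continuous_toLp 2 (fun _ : Fin (m + 2) => ℝ)).comp hc
  refine continuous_pi fun i => ?_
  by_cases h : (i : ℕ) < m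
  · simp only [dif_pos h]
    exact (EuclideanSpace.proj (⟨i, h⟩ : Fin m)).continuous.comp continuous_fst
  · simp only [dif_neg h]
    exact (EuclideanSpace.proj (⟨(i : ℕ) - m, by have := i.isLt; omega⟩ : Fin 2)).continuous.comp
      continuous_snd

lemma inner_two (X Y : EuclideanSpace ℝ (Fin 2)) : ⟪X, Y⟫ = X 0 * Y 0 + X 1 * Y 1 := by
  simp [PiLp.inner_apply, RCLike.inner_apply, Fin.sum_univ_two]
  ring

lemma jplus_apply0 (X : EuclideanSpace ℝ (Fin 2)) : jplus X 0 = -(X 1) := rfl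
lemma jplus_apply1 (X : EuclideanSpace ℝ (Fin 2)) : jplus X 1 = X 0 := rfl

lemma inner_jplus (X : EuclideanSpace ℝ (Fin 2)) : ⟪X, jplus X⟫ = 0 := by
  rw [inner_two, jplus_apply0, jplus_apply1]; ring

lemma norm_jplus_sq (X : EuclideanSpace ℝ (Fin 2)) : ‖jplus X‖ ^ 2 = ‖X‖ ^ 2 := by
  rw [← real_inner_self_eq_norm_sq, ← real_inner_self_eq_norm_sq, inner_two, inner_two,
    jplus_apply0, jplus_apply1]; ring

lemma jplus_continuous : Continuous jplus := by
  suffices hc : Continuous (fun X : EuclideanSpace ℝ (Fin 2) =>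
      (fun i : Fin 2 => if (i : ℕ) = 0 then -(X 1) else X 0 : Fin 2 → ℝ)) by
    exact (PiLp.continuous_toLp 2 (fun _ : Fin 2 => ℝ)).comp hc
  refine continuous_pi fun i => ?_
  by_cases h : (i : ℕ) = 0
  · simp only [if_pos h]
    exact (EuclideanSpace.proj (1 : Fin 2)).continuous.neg
  · simp only [if_neg h]
    exact (EuclideanSpace.proj (0 : Fin 2)).continuous

lemma norm_eq_one_of_sq {k : ℕ} (v : EuclideanSpace ℝ (Fin k)) (h : ‖v‖ ^ 2 = 1) : ‖v‖ = 1 := by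
  have := norm_nonneg v; nlinarith

/- ### The homotopy -/

/-- First vector of the homotopy at time `t`. -/
noncomputable def stabU {m : ℕ} (a : EuclideanSpace ℝ (Fin m)) (t : ℝ)
    (X : EuclideanSpace ℝ (Fin 2)) : EuclideanSpace ℝ (Fin (m + 2)) :=
  glue (Real.sqrt (1 - (max 0 (Real.cos (Real.pi * t))) ^ 2 * ‖X‖ ^ 2) • a)
    ((max 0 (Real.cos (Real.pi * t))) • X)

/-- Second vector of the homotopy at time `t`. -/
noncomputable def stabV {m : ℕ} (b : EuclideanSpace ℝ (Fin m)) (t : ℝ)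
    (X : EuclideanSpace ℝ (Fin 2)) : EuclideanSpace ℝ (Fin (m + 2)) :=
  glue b (Real.sin (max 0 (2 * t - 1) * (Real.pi / 2)) • X
    + Real.cos (max 0 (2 * t - 1) * (Real.pi / 2)) • (-(jplus X)))

lemma aux_normU {m : ℕ} (a : EuclideanSpace ℝ (Fin m)) (ha : ‖a‖ = 1)
    (X : EuclideanSpace ℝ (Fin 2)) (c : ℝ) (hc0 : 0 ≤ c) (h1 : 0 ≤ 1 - c ^ 2 * ‖X‖ ^ 2) :
    ‖glue (Real.sqrt (1 - c ^ 2 * ‖X‖ ^ 2) • a) (c • X)‖ = 1 := by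
  apply norm_eq_one_of_sq
  rw [glue_norm_sq, norm_smul, norm_smul, ha, Real.norm_eq_abs, Real.norm_eq_abs,
    abs_of_nonneg (Real.sqrt_nonneg _), abs_of_nonneg hc0, mul_pow, mul_pow, Real.sq_sqrt h1]
  ring

lemma aux_normV {m : ℕ} (b : EuclideanSpace ℝ (Fin m)) (X : EuclideanSpace ℝ (Fin 2))
    (s co : ℝ) (hs : s ^ 2 + co ^ 2 = 1) (hsum : ‖b‖ ^ 2 + ‖X‖ ^ 2 = 1) :
    ‖glue b (s • X + co • (-(jplus X)))‖ = 1 := by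
  apply norm_eq_one_of_sq
  rw [glue_norm_sq, norm_add_sq_real]
  have h2 : ⟪s • X, co • (-(jplus X))⟫ = 0 := by
    rw [real_inner_smul_left, real_inner_smul_right, inner_neg_right, inner_jplus]; ring
  rw [h2, norm_smul, norm_smul, norm_neg, Real.norm_eq_abs, Real.norm_eq_abs, mul_pow, mul_pow,
    sq_abs, sq_abs]
  have h3 := norm_jplus_sq X
  nlinarith

lemma aux_inner {m : ℕ} (a b : EuclideanSpace ℝ (Fin m)) (X : EuclideanSpace ℝ (Fin 2))
    (q c s co : ℝ) (hab : ⟪a, b⟫ = 0) (hcs : c * s = 0) :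
    ⟪glue (Real.sqrt q • a) (c • X), glue b (s • X + co • (-(jplus X)))⟫ = 0 := by
  rw [glue_inner, real_inner_smul_left, hab, mul_zero, zero_add, real_inner_smul_left,
    inner_add_right, real_inner_smul_right, real_inner_smul_right, inner_neg_right, inner_jplus]
  have : ⟪X, X⟫ = ‖X‖ ^ 2 := real_inner_self_eq_norm_sq X
  rw [this]
  nlinarith [hcs]

lemma stab_mem {m : ℕ} (a b : EuclideanSpace ℝ (Fin m)) (X : EuclideanSpace ℝ (Fin 2))
    (ha : ‖a‖ = 1) (hab : ⟪a, b⟫ = 0) (hsum : ‖b‖ ^ 2 + ‖X‖ ^ 2 = 1)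
    (t : ℝ) (ht0 : 0 ≤ t) (ht1 : t ≤ 1) :
    ‖stabU a t X‖ = 1 ∧ ‖stabV b t X‖ = 1 ∧ ⟪stabU a t X, stabV b t X⟫ = 0 := by
  have hX1 : ‖X‖ ^ 2 ≤ 1 := by nlinarith [sq_nonneg ‖b‖]
  have hc0 : (0 : ℝ) ≤ max 0 (Real.cos (Real.pi * t)) := le_max_left _ _
  have hc1 : max 0 (Real.cos (Real.pi * t)) ≤ 1 := max_le zero_le_one (Real.cos_le_one _)
  have h1 : 0 ≤ 1 - (max 0 (Real.cos (Real.pi * t))) ^ 2 * ‖X‖ ^ 2 := by nlinarith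
  have hcs : max 0 (Real.cos (Real.pi * t)) *
      Real.sin (max 0 (2 * t - 1) * (Real.pi / 2)) = 0 := by
    rcases le_or_gt t (1 / 2) with h | h
    · have hd : max 0 (2 * t - 1) = 0 := max_eq_left (by linarith)
      rw [hd]; simp
    · have hpi := Real.pi_pos
      have hcz : max 0 (Real.cos (Real.pi * t)) = 0 :=
        max_eq_left (Real.cos_nonpos_of_pi_div_two_le_of_le (by nlinarith) (by nlinarith))
      rw [hcz, zero_mul]
  refine ⟨?_, ?_, ?_⟩
  · exact aux_normU a ha X _ hc0 h1
  · exact aux_normV b X _ _ (Real.sin_sq_add_cos_sq _) hsum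
  · exact aux_inner a b X _ _ _ _ hab hcs

lemma stabU_zero {m : ℕ} (a : EuclideanSpace ℝ (Fin m)) (X : EuclideanSpace ℝ (Fin 2)) :
    stabU a 0 X = glue (Real.sqrt (1 - ‖X‖ ^ 2) • a) X := by
  have : max 0 (Real.cos (Real.pi * 0)) = 1 := by
    rw [mul_zero, Real.cos_zero]; exact max_eq_right zero_le_one
  rw [stabU, this, one_pow, one_mul, one_smul]

lemma stabU_one {m : ℕ} (a : EuclideanSpace ℝ (Fin m)) (X : EuclideanSpace ℝ (Fin 2)) :
    stabU a 1 X = glue a 0 := by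
  have : max 0 (Real.cos (Real.pi * 1)) = 0 := by
    rw [mul_one, Real.cos_pi]; exact max_eq_left (by norm_num)
  rw [stabU, this]
  norm_num

lemma stabV_zero {m : ℕ} (b : EuclideanSpace ℝ (Fin m)) (X : EuclideanSpace ℝ (Fin 2)) :
    stabV b 0 X = glue b (-(jplus X)) := by
  have : max 0 (2 * (0 : ℝ) - 1) = 0 := max_eq_left (by norm_num)
  rw [stabV, this, zero_mul, Real.sin_zero, Real.cos_zero, zero_smul, one_smul, zero_add]

lemma stabV_one {m : ℕ} (b : EuclideanSpace ℝ (Fin m)) (X : EuclideanSpace ℝ (Fin 2)) :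
    stabV b 1 X = glue b X := by
  have : max 0 (2 * (1 : ℝ) - 1) = 1 := by rw [max_eq_right] <;> norm_num
  rw [stabV, this, one_mul, Real.sin_pi_div_two, Real.cos_pi_div_two, zero_smul, one_smul, add_zero]

lemma stabU_continuous {m : ℕ} (a : EuclideanSpace ℝ (Fin m)) :
    Continuous fun q : ℝ × EuclideanSpace ℝ (Fin 2) => stabU a q.1 q.2 := by
  have hc : Continuous fun q : ℝ × EuclideanSpace ℝ (Fin 2) =>
      max 0 (Real.cos (Real.pi * q.1)) :=
    continuous_const.max (Real.continuous_cos.comp (continuous_const.mul continuous_fst))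
  have hn : Continuous fun q : ℝ × EuclideanSpace ℝ (Fin 2) => ‖q.2‖ ^ 2 :=
    (continuous_norm.comp continuous_snd).pow 2
  exact Continuous.comp (g := fun p : EuclideanSpace ℝ (Fin m) × EuclideanSpace ℝ (Fin 2) => glue p.1 p.2) glue_continuous
    (((Real.continuous_sqrt.comp (continuous_const.sub ((hc.pow 2).mul hn))).smul
      continuous_const).prodMk (hc.smul continuous_snd))

lemma stabV_continuous {m : ℕ} :
    Continuous fun q : ℝ × (EuclideanSpace ℝ (Fin m) × EuclideanSpace ℝ (Fin 2)) =>
      stabV q.2.1 q.1 q.2.2 := by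
  have hd : Continuous fun q : ℝ × (EuclideanSpace ℝ (Fin m) × EuclideanSpace ℝ (Fin 2)) =>
      max 0 (2 * q.1 - 1) * (Real.pi / 2) :=
    (continuous_const.max ((continuous_const.mul continuous_fst).sub continuous_const)).mul
      continuous_const
  have hX : Continuous fun q : ℝ × (EuclideanSpace ℝ (Fin m) × EuclideanSpace ℝ (Fin 2)) =>
      q.2.2 := continuous_snd.comp continuous_snd
  exact Continuous.comp (g := fun p : EuclideanSpace ℝ (Fin m) × EuclideanSpace ℝ (Fin 2) => glue p.1 p.2) glue_continuous
    ((continuous_fst.comp continuous_snd).prodMk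
      (((Real.continuous_sin.comp hd).smul hX).add
        ((Real.continuous_cos.comp hd).smul ((jplus_continuous.comp hX).neg))))

attribute [irreducible] stabU stabV glue jplus

set_option maxHeartbeats 1000000 in
/-- On the double suspension
`D = {(b, X) : ⟨a,b⟩ = 0, ‖b‖² + ‖X‖² = 1} ⊆ ℝ^{2n} × ℝ²` of the fibre sphere `S(a^⊥)`,
the maps `F(b,X) = ((√(1-‖X‖²)·a, X), (b, -j₊X))` and `G(b,X) = ((a,0), (b,X))` take values in
the Stiefel manifold `Q̃_{n+1}` of 2-frames in `ℝ^{2n+2}` and are homotopic. -/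
theorem stabilization_of_fibre_inclusion (n : ℕ) (hn : 2 ≤ n)
    (a : EuclideanSpace ℝ (Fin (2 * n))) (ha : ‖a‖ = 1) :
    ∃ F G : C({bX : EuclideanSpace ℝ (Fin (2 * n)) × EuclideanSpace ℝ (Fin 2) //
                  ⟪a, bX.1⟫ = 0 ∧ ‖bX.1‖ ^ 2 + ‖bX.2‖ ^ 2 = 1},
              Stiefel2 (2 * n + 2)),
      (∀ z, (F z).val =
        (glue (Real.sqrt (1 - ‖z.val.2‖ ^ 2) • a) z.val.2, glue z.val.1 (-(jplus z.val.2)))) ∧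
      (∀ z, (G z).val = (glue a 0, glue z.val.1 z.val.2)) ∧
      F.Homotopic G := by
  have hmem : ∀ (t : ℝ), 0 ≤ t → t ≤ 1 →
      ∀ z : {bX : EuclideanSpace ℝ (Fin (2 * n)) × EuclideanSpace ℝ (Fin 2) //
        ⟪a, bX.1⟫ = 0 ∧ ‖bX.1‖ ^ 2 + ‖bX.2‖ ^ 2 = 1},
      ‖stabU a t z.val.2‖ = 1 ∧ ‖stabV z.val.1 t z.val.2‖ = 1 ∧
        ⟪stabU a t z.val.2, stabV z.val.1 t z.val.2⟫ = 0 :=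
    fun t ht0 ht1 z => stab_mem a z.val.1 z.val.2 ha z.prop.1 z.prop.2 t ht0 ht1
  let H : C(unitInterval × {bX : EuclideanSpace ℝ (Fin (2 * n)) × EuclideanSpace ℝ (Fin 2) //
      ⟪a, bX.1⟫ = 0 ∧ ‖bX.1‖ ^ 2 + ‖bX.2‖ ^ 2 = 1}, Stiefel2 (2 * n + 2)) :=
    { toFun := fun p => ⟨(stabU a p.1 p.2.val.2, stabV p.2.val.1 p.1 p.2.val.2),
        hmem p.1 p.1.prop.1 p.1.prop.2 p.2⟩
      continuous_toFun := by
        apply Continuous.subtype_mk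
        have ht : Continuous fun p : unitInterval ×
            {bX : EuclideanSpace ℝ (Fin (2 * n)) × EuclideanSpace ℝ (Fin 2) //
              ⟪a, bX.1⟫ = 0 ∧ ‖bX.1‖ ^ 2 + ‖bX.2‖ ^ 2 = 1} => (p.1 : ℝ) :=
          continuous_subtype_val.comp continuous_fst
        have hz : Continuous fun p : unitInterval ×
            {bX : EuclideanSpace ℝ (Fin (2 * n)) × EuclideanSpace ℝ (Fin 2) //
              ⟪a, bX.1⟫ = 0 ∧ ‖bX.1‖ ^ 2 + ‖bX.2‖ ^ 2 = 1} => p.2.val :=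
          continuous_subtype_val.comp continuous_snd
        exact ((stabU_continuous a).comp (ht.prodMk (continuous_snd.comp hz))).prodMk
          (stabV_continuous.comp (ht.prodMk hz)) }
  refine ⟨H.comp ⟨fun z => (0, z), continuous_const.prodMk continuous_id⟩,
    H.comp ⟨fun z => (1, z), continuous_const.prodMk continuous_id⟩, ?_, ?_, ?_⟩
  · intro z
    show (stabU a ((0 : unitInterval) : ℝ) z.val.2,
        stabV z.val.1 ((0 : unitInterval) : ℝ) z.val.2) = _
    rw [Set.Icc.coe_zero, stabU_zero, stabV_zero]
  · intro z
    show (stabU a ((1 : unitInterval) : ℝ) z.val.2,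
        stabV z.val.1 ((1 : unitInterval) : ℝ) z.val.2) = _
    rw [Set.Icc.coe_one, stabU_one, stabV_one]
  · exact ⟨⟨H, fun z => rfl, fun z => rfl⟩⟩
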